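/- The monic Laguerre polynomials satisfy the rescaling connection formula L^b_k(x/2) = 2^{-k}·∑_{i=0}^{k} C(b+k, k-i)·(k!/i!)·(-1)^{i-k}·L^b_i(x) for all real x, b > -1 and every nonnegative integer k. -/

import Mathlib

open Polynomial Finset MeasureTheory Real

lemma alt_sum_poly : ∀ (n : ℕ) (p : Polynomial ℝ), p.natDegree < n →
    ∑ t ∈ Finset.range (n + 1), (-1 : ℝ) ^ t * (n.choose t : ℝ) * p.eval (t : ℝ) = 0 := by
  intro n
  induction n with
  | zero => intro p hp; omega
  | succ n ih =>
    intro p hp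
    set q : Polynomial ℝ := p.comp (Polynomial.X + Polynomial.C 1) - p with hq
    have hX1 : (Polynomial.X + Polynomial.C (1:ℝ)).natDegree = 1 := Polynomial.natDegree_X_add_C 1
    have hXlc : (Polynomial.X + Polynomial.C (1:ℝ)).leadingCoeff = 1 :=
      Polynomial.leadingCoeff_X_add_C 1
    have hcomp_eval : ∀ y : ℝ, (p.comp (Polynomial.X + Polynomial.C 1)).eval y = p.eval (y + 1) := by
      intro y; simp [Polynomial.eval_comp]
    have key : ∑ t ∈ Finset.range (n + 2), (-1 : ℝ) ^ t * ((n+1).choose t : ℝ) * p.eval (t : ℝ)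
        = -∑ i ∈ Finset.range (n + 1), (-1 : ℝ) ^ i * (n.choose i : ℝ) * q.eval (i : ℝ) := by
      rw [Finset.sum_range_succ']
      have h1 : ∀ i : ℕ, (-1 : ℝ) ^ (i+1) * ((n+1).choose (i+1) : ℝ) * p.eval ((i+1 : ℕ) : ℝ)
          = (-1 : ℝ) ^ (i+1) * ((n).choose (i+1) : ℝ) * p.eval ((i+1 : ℕ) : ℝ)
            - (-1 : ℝ) ^ i * ((n).choose i : ℝ) * p.eval ((i+1 : ℕ) : ℝ) := by
        intro i
        rw [Nat.choose_succ_succ]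
        push_cast
        ring
      rw [Finset.sum_congr rfl fun i _ => h1 i, Finset.sum_sub_distrib]
      have e1 := Finset.sum_range_succ' (fun t => (-1:ℝ)^t * (n.choose t : ℝ) * p.eval (t:ℝ)) (n+1)
      rw [Finset.sum_range_succ _ (n+1)] at e1
      simp only [Nat.choose_succ_self, Nat.cast_zero, mul_zero, zero_mul, add_zero,
        Nat.choose_zero_right, Nat.cast_one, pow_zero, one_mul] at e1 ⊢
      have h3 : ∑ i ∈ Finset.range (n + 1),
            (-1 : ℝ) ^ i * ((n).choose i : ℝ) * p.eval ((i+1 : ℕ) : ℝ)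
          = ∑ i ∈ Finset.range (n + 1),
            (-1 : ℝ) ^ i * ((n).choose i : ℝ) * (p.comp (Polynomial.X + Polynomial.C 1)).eval (i : ℝ) := by
        refine Finset.sum_congr rfl fun i _ => ?_
        rw [hcomp_eval]
        push_cast
        ring_nf
      have h4 : ∀ i : ℕ, (-1 : ℝ) ^ i * (n.choose i : ℝ) * q.eval (i : ℝ)
          = (-1 : ℝ) ^ i * (n.choose i : ℝ) * (p.comp (Polynomial.X + Polynomial.C 1)).eval (i : ℝ)
            - (-1 : ℝ) ^ i * (n.choose i : ℝ) * p.eval (i : ℝ) := by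
        intro i; rw [hq]; simp; ring
      rw [Finset.sum_congr rfl fun i _ => h4 i, Finset.sum_sub_distrib]
      push_cast at e1 h3 ⊢
      linarith [e1, h3]
    rw [show n + 1 + 1 = n + 2 from rfl, key]
    rcases eq_or_ne q 0 with h0 | h0
    · simp [h0]
    · have hpne : p ≠ 0 := by
        rintro rfl; simp [hq] at h0
      have hcne : p.comp (Polynomial.X + Polynomial.C 1) ≠ 0 := by
        intro h
        have h2 := Polynomial.leadingCoeff_comp (p := p)
          (q := Polynomial.X + Polynomial.C (1:ℝ)) (by rw [hX1]; norm_num)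
        rw [h, hXlc, one_pow, mul_one, Polynomial.leadingCoeff_zero] at h2
        exact hpne (Polynomial.leadingCoeff_eq_zero.mp h2.symm)
      have hdc : (p.comp (Polynomial.X + Polynomial.C 1)).degree = p.degree := by
        rw [Polynomial.degree_eq_natDegree hcne, Polynomial.degree_eq_natDegree hpne,
          Polynomial.natDegree_comp, hX1, mul_one]
      have hlc : (p.comp (Polynomial.X + Polynomial.C 1)).leadingCoeff = p.leadingCoeff := by
        rw [Polynomial.leadingCoeff_comp (by rw [hX1]; norm_num), hXlc, one_pow, mul_one]
      have hdl := Polynomial.degree_sub_lt hdc hcne hlc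
      rw [← hq, hdc, Polynomial.degree_eq_natDegree hpne] at hdl
      have hqlt : q.natDegree < p.natDegree :=
        (Polynomial.natDegree_lt_iff_degree_lt h0).mpr hdl
      have hpd : 1 ≤ p.natDegree := by
        rcases Nat.eq_zero_or_pos p.natDegree with h|h
        · obtain ⟨c, hc⟩ := Polynomial.natDegree_eq_zero.mp h
          rw [← hc] at hq
          simp [hq] at h0
        · exact h
      rw [ih q (by omega), neg_zero]

lemma choose_sq_sum (k j : ℕ) (hj : j ≤ k) :
    ∑ i ∈ Finset.range (k+1), k.choose i * i.choose j = k.choose j * 2 ^ (k - j) := by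
  rw [Finset.range_eq_Ico, ← Finset.sum_Ico_consecutive _ (Nat.zero_le j) (by omega : j ≤ k+1)]
  have h1 : ∑ i ∈ Finset.Ico 0 j, k.choose i * i.choose j = 0 := by
    apply Finset.sum_eq_zero; intro i hi
    simp only [Finset.mem_Ico] at hi
    rw [Nat.choose_eq_zero_of_lt hi.2, mul_zero]
  rw [h1, zero_add, Finset.sum_Ico_eq_sum_range]
  have h2 : ∀ s ∈ Finset.range (k+1-j), k.choose (j+s) * (j+s).choose j
      = k.choose j * (k-j).choose s := by
    intro s hs
    simp only [Finset.mem_range] at hs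
    have := Nat.choose_mul (n := k) (show j ≤ j+s by omega)
    simpa using this
  rw [Finset.sum_congr rfl h2, ← Finset.mul_sum]
  congr 1
  rw [show k+1-j = (k-j)+1 by omega, Nat.sum_range_choose]

noncomputable def aL (b : ℝ) (n j : ℕ) : ℝ :=
  (-1)^(n-j) * (n.choose j : ℝ) * (Real.Gamma (b + n + 1) / Real.Gamma (b + j + 1))

noncomputable def ell (b : ℝ) (n : ℕ) : Polynomial ℝ :=
  ∑ j ∈ Finset.range (n+1), Polynomial.C (aL b n j) * Polynomial.X ^ j

lemma aL_zero (b : ℝ) {n j : ℕ} (h : n < j) : aL b n j = 0 := by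
  rw [aL, Nat.choose_eq_zero_of_lt h]; simp

lemma Gpos {b : ℝ} (hb : -1 < b) (j : ℕ) : 0 < Real.Gamma (b + j + 1) :=
  Real.Gamma_pos_of_pos (by have := Nat.cast_nonneg (α := ℝ) j; linarith)

lemma aL_diag {b : ℝ} (hb : -1 < b) (n : ℕ) : aL b n n = 1 := by
  rw [aL]
  simp [div_self (ne_of_gt (Gpos hb n))]

lemma ell_coeff (b : ℝ) (n t : ℕ) : (ell b n).coeff t = aL b n t := by
  rw [ell, Polynomial.finset_sum_coeff]
  simp only [Polynomial.coeff_C_mul, Polynomial.coeff_X_pow, mul_ite, mul_one, mul_zero]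
  rw [Finset.sum_ite_eq (Finset.range (n+1)) t (fun j => aL b n j)]
  split_ifs with h
  · rfl
  · rw [aL_zero b (by simpa using h)]

lemma ell_natDegree {b : ℝ} (hb : -1 < b) (n : ℕ) : (ell b n).natDegree = n := by
  have hle : (ell b n).natDegree ≤ n := by
    apply Polynomial.natDegree_le_iff_coeff_eq_zero.mpr
    intro m hm
    rw [ell_coeff, aL_zero b hm]
  have hne : (ell b n).coeff n ≠ 0 := by
    rw [ell_coeff, aL_diag hb]; norm_num
  exact le_antisymm hle (Polynomial.le_natDegree_of_ne_zero hne)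

lemma ell_monic {b : ℝ} (hb : -1 < b) (n : ℕ) : (ell b n).Monic := by
  rw [Polynomial.Monic, Polynomial.leadingCoeff, ell_natDegree hb, ell_coeff, aL_diag hb]

lemma ell_eval (b : ℝ) (n m : ℕ) (h : n < m) (x : ℝ) :
    (ell b n).eval x = ∑ j ∈ Finset.range m, aL b n j * x ^ j := by
  rw [ell]
  rw [Polynomial.eval_finset_sum]
  simp only [Polynomial.eval_mul, Polynomial.eval_C, Polynomial.eval_pow, Polynomial.eval_X]
  apply Finset.sum_subset (Finset.range_subset_range.mpr h)
  intro j _ hj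
  simp only [Finset.mem_range, not_lt] at hj
  rw [aL_zero b (by omega), zero_mul]

noncomputable def W (b : ℝ) (r : Polynomial ℝ) : ℝ :=
  ∫ x in Set.Ioi (0:ℝ), x ^ b * Real.exp (-x) * r.eval x

lemma mono_eqOn (b : ℝ) (j : ℕ) :
    Set.EqOn (fun x : ℝ => Real.exp (-x) * x ^ (b + (j:ℝ) + 1 - 1))
      (fun x : ℝ => x ^ b * Real.exp (-x) * x ^ j) (Set.Ioi 0) := by
  intro x hx
  have hx0 : (0:ℝ) < x := hx
  simp only []
  rw [add_sub_cancel_right, Real.rpow_add hx0, ← Real.rpow_natCast x j]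
  ring

lemma integrableOn_mono {b : ℝ} (hb : -1 < b) (j : ℕ) :
    IntegrableOn (fun x : ℝ => x ^ b * Real.exp (-x) * x ^ j) (Set.Ioi 0) := by
  have hpos : 0 < b + (j:ℝ) + 1 := by have := Nat.cast_nonneg (α := ℝ) j; linarith
  exact (Real.GammaIntegral_convergent hpos).congr_fun (mono_eqOn b j) measurableSet_Ioi

lemma integral_mono {b : ℝ} (hb : -1 < b) (j : ℕ) :
    ∫ x in Set.Ioi (0:ℝ), x ^ b * Real.exp (-x) * x ^ j = Real.Gamma (b + j + 1) := by
  have hpos : 0 < b + (j:ℝ) + 1 := by have := Nat.cast_nonneg (α := ℝ) j; linarith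
  rw [← setIntegral_congr_fun measurableSet_Ioi (mono_eqOn b j),
    ← Real.Gamma_eq_integral hpos]

lemma integrand_poly_eq (b : ℝ) (r : Polynomial ℝ) (x : ℝ) :
    x ^ b * Real.exp (-x) * r.eval x
      = ∑ j ∈ Finset.range (r.natDegree + 1), r.coeff j * (x ^ b * Real.exp (-x) * x ^ j) := by
  conv_lhs => rw [Polynomial.eval_eq_sum_range, Finset.mul_sum]
  exact Finset.sum_congr rfl fun j _ => by ring

lemma integrableOn_weight_poly {b : ℝ} (hb : -1 < b) (r : Polynomial ℝ) :
    IntegrableOn (fun x : ℝ => x ^ b * Real.exp (-x) * r.eval x) (Set.Ioi 0) := by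
  have : (fun x : ℝ => x ^ b * Real.exp (-x) * r.eval x)
      = fun x : ℝ => ∑ j ∈ Finset.range (r.natDegree + 1),
          r.coeff j * (x ^ b * Real.exp (-x) * x ^ j) := by
    funext x; exact integrand_poly_eq b r x
  rw [this]
  exact integrable_finset_sum _ fun j _ => (integrableOn_mono hb j).const_mul _

lemma W_add {b : ℝ} (hb : -1 < b) (p q : Polynomial ℝ) : W b (p + q) = W b p + W b q := by
  simp only [W, Polynomial.eval_add, mul_add]
  exact integral_add (integrableOn_weight_poly hb p) (integrableOn_weight_poly hb q)

lemma W_zero (b : ℝ) : W b 0 = 0 := by simp [W]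

lemma W_Cmul (b : ℝ) (c : ℝ) (p : Polynomial ℝ) : W b (Polynomial.C c * p) = c * W b p := by
  simp only [W, Polynomial.eval_mul, Polynomial.eval_C]
  rw [← integral_const_mul]
  congr 1; funext x; ring

lemma W_sum {b : ℝ} (hb : -1 < b) {ι : Type*} (s : Finset ι) (f : ι → Polynomial ℝ) :
    W b (∑ i ∈ s, f i) = ∑ i ∈ s, W b (f i) := by
  classical
  induction s using Finset.induction_on with
  | empty => simp [W_zero]
  | insert _ _ h ih => rw [Finset.sum_insert h, W_add hb, ih, Finset.sum_insert h]

lemma W_monomial {b : ℝ} (hb : -1 < b) (m : ℕ) :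
    W b (Polynomial.X ^ m) = Real.Gamma (b + m + 1) := by
  simp only [W, Polynomial.eval_pow, Polynomial.eval_X]
  exact integral_mono hb m

lemma neg_one_pow_sub_real {n t : ℕ} (h : t ≤ n) : (-1:ℝ)^(n-t) = (-1)^n * (-1)^t := by
  have h1 : (-1:ℝ)^(n-t) * (-1)^t = (-1)^n := by
    rw [← pow_add, Nat.sub_add_cancel h]
  have h2 : ((-1:ℝ)^t) * ((-1:ℝ)^t) = 1 := by
    rw [← pow_add]; exact Even.neg_one_pow ⟨t, rfl⟩
  calc (-1:ℝ)^(n-t) = (-1:ℝ)^(n-t) * (((-1:ℝ)^t) * ((-1:ℝ)^t)) := by rw [h2, mul_one]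
    _ = ((-1:ℝ)^(n-t) * (-1)^t) * (-1)^t := by ring
    _ = (-1)^n * (-1)^t := by rw [h1]

lemma Gamma_ratio {b : ℝ} (hb : -1 < b) (t j : ℕ) :
    Real.Gamma (b + t + j + 1) = Real.Gamma (b + t + 1) * ∏ s ∈ Finset.range j, (b + t + 1 + s) := by
  induction j with
  | zero => simp
  | succ j ih =>
    have hne : b + t + j + 1 ≠ 0 := by
      have h1 := Nat.cast_nonneg (α := ℝ) t; have h2 := Nat.cast_nonneg (α := ℝ) j
      intro h; linarith
    have : b + (t:ℝ) + (j+1:ℕ) + 1 = (b + t + j + 1) + 1 := by push_cast; ring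
    rw [this, Real.Gamma_add_one hne, ih, Finset.prod_range_succ]
    ring

lemma W_X_mul_ell {b : ℝ} (hb : -1 < b) {j n : ℕ} (hjn : j < n) :
    W b (Polynomial.X ^ j * ell b n) = 0 := by
  have hexp : Polynomial.X ^ j * ell b n
      = ∑ t ∈ Finset.range (n+1), Polynomial.C (aL b n t) * Polynomial.X ^ (t + j) := by
    rw [ell, Finset.mul_sum]
    exact Finset.sum_congr rfl fun t _ => by rw [pow_add]; ring
  rw [hexp, W_sum hb]
  have hval : ∀ t : ℕ, W b (Polynomial.C (aL b n t) * Polynomial.X ^ (t + j))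
      = aL b n t * Real.Gamma (b + t + j + 1) := by
    intro t
    rw [W_Cmul, W_monomial hb]
    congr 2
    push_cast; ring
  rw [Finset.sum_congr rfl fun t _ => hval t]
  -- introduce the polynomial P of degree j
  set P : Polynomial ℝ := ∏ s ∈ Finset.range j, (Polynomial.X + Polynomial.C (b + 1 + s)) with hP
  have hPdeg : P.natDegree = j := by
    rw [hP, Polynomial.natDegree_prod _ _ (fun s _ => Polynomial.X_add_C_ne_zero _)]
    simp only [Polynomial.natDegree_X_add_C, Finset.sum_const, Finset.card_range, smul_eq_mul, mul_one]
  have hPeval : ∀ t : ℕ, P.eval (t:ℝ) = ∏ s ∈ Finset.range j, (b + t + 1 + s) := by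
    intro t
    rw [hP, Polynomial.eval_prod]
    exact Finset.prod_congr rfl fun s _ => by simp; ring
  have hterm : ∀ t ∈ Finset.range (n+1), aL b n t * Real.Gamma (b + t + j + 1)
      = Real.Gamma (b + n + 1) * ((-1:ℝ)^n * ((-1:ℝ)^t * ((n.choose t : ℝ) * P.eval (t:ℝ)))) := by
    intro t ht
    simp only [Finset.mem_range] at ht
    have hGt : Real.Gamma (b + t + 1) ≠ 0 := ne_of_gt (Gpos hb t)
    rw [aL, Gamma_ratio hb t j, hPeval, neg_one_pow_sub_real (by omega : t ≤ n)]
    field_simp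
  rw [Finset.sum_congr rfl hterm, ← Finset.mul_sum]
  have : ∑ t ∈ Finset.range (n+1), (-1:ℝ)^n * ((-1:ℝ)^t * ((n.choose t : ℝ) * P.eval (t:ℝ)))
      = (-1:ℝ)^n * ∑ t ∈ Finset.range (n+1), (-1:ℝ)^t * (n.choose t : ℝ) * P.eval (t:ℝ) := by
    rw [Finset.mul_sum]
    exact Finset.sum_congr rfl fun t _ => by ring
  rw [this, alt_sum_poly n P (by omega)]
  ring

lemma W_ell_ell {b : ℝ} (hb : -1 < b) {m n : ℕ} (hmn : m < n) :
    W b (ell b m * ell b n) = 0 := by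
  have hexp : ell b m * ell b n
      = ∑ t ∈ Finset.range (m+1), Polynomial.C (aL b m t) * (Polynomial.X ^ t * ell b n) := by
    rw [ell, Finset.sum_mul]
    exact Finset.sum_congr rfl fun t _ => by ring
  rw [hexp, W_sum hb]
  apply Finset.sum_eq_zero
  intro t ht
  simp only [Finset.mem_range] at ht
  rw [W_Cmul, W_X_mul_ell hb (by omega), mul_zero]

lemma W_sq_pos {b : ℝ} (hb : -1 < b) {q : Polynomial ℝ} (hq : q ≠ 0) : 0 < W b (q * q) := by
  rw [W]
  have hnn : 0 ≤ᵐ[volume.restrict (Set.Ioi (0:ℝ))]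
      fun x => x ^ b * Real.exp (-x) * (q*q).eval x := by
    filter_upwards [ae_restrict_mem measurableSet_Ioi] with x hx
    have hx0 : (0:ℝ) < x := hx
    simp only [Polynomial.eval_mul, Pi.zero_apply]
    have h1 : (0:ℝ) ≤ x ^ b := Real.rpow_nonneg hx0.le b
    have h2 : x ^ b * Real.exp (-x) * (q.eval x * q.eval x)
        = (x ^ b * Real.exp (-x)) * (q.eval x)^2 := by ring
    rw [h2]
    positivity
  rw [setIntegral_pos_iff_support_of_nonneg_ae hnn (integrableOn_weight_poly hb _)]
  have hfin : ({x : ℝ | q.IsRoot x}).Finite := Polynomial.finite_setOf_isRoot hq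
  have hsub : Set.Ioi (0:ℝ) \ {x : ℝ | q.IsRoot x}
      ⊆ Function.support (fun x => x ^ b * Real.exp (-x) * (q*q).eval x) ∩ Set.Ioi 0 := by
    rintro x ⟨hx1, hx2⟩
    refine ⟨?_, hx1⟩
    have hx0 : (0:ℝ) < x := hx1
    have hqx : q.eval x ≠ 0 := hx2
    simp only [Function.mem_support, Polynomial.eval_mul]
    exact mul_ne_zero (mul_ne_zero (ne_of_gt (Real.rpow_pos_of_pos hx0 b))
      (Real.exp_ne_zero _)) (mul_ne_zero hqx hqx)
  calc (0:ENNReal) < volume (Set.Ioi (0:ℝ) \ {x : ℝ | q.IsRoot x}) := by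
        rw [measure_diff_null (hfin.measure_zero _), Real.volume_Ioi]
        exact ENNReal.zero_lt_top
    _ ≤ _ := measure_mono hsub

lemma ell_span {b : ℝ} (hb : -1 < b) :
    ∀ (n : ℕ) (p : Polynomial ℝ), p = 0 ∨ p.natDegree < n →
    ∃ d : ℕ → ℝ, p = ∑ i ∈ Finset.range n, Polynomial.C (d i) * ell b i := by
  intro n
  induction n with
  | zero =>
    rintro p (rfl | h)
    · exact ⟨0, by simp⟩
    · omega
  | succ n ih =>
    rintro p hp
    rcases eq_or_ne p 0 with rfl | hne
    · exact ⟨0, by simp⟩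
    have hdeg : p.natDegree ≤ n := by
      rcases hp with h | h
      · exact absurd h hne
      · omega
    set m := p.natDegree with hm
    set r := Polynomial.C p.leadingCoeff * ell b m with hr
    have hlcne : p.leadingCoeff ≠ 0 := Polynomial.leadingCoeff_ne_zero.mpr hne
    have hellne : ell b m ≠ 0 := (ell_monic hb m).ne_zero
    have hrd : r.degree = p.degree := by
      rw [hr, Polynomial.degree_C_mul hlcne, Polynomial.degree_eq_natDegree hellne,
        Polynomial.degree_eq_natDegree hne, ell_natDegree hb]
    have hrlc : r.leadingCoeff = p.leadingCoeff := by
      rw [hr, Polynomial.leadingCoeff_mul, Polynomial.leadingCoeff_C,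
        (ell_monic hb m).leadingCoeff, mul_one]
    set q := p - r with hq
    have hq0 : q = 0 ∨ q.natDegree < n := by
      rcases eq_or_ne q 0 with h | h
      · exact Or.inl h
      · right
        have := Polynomial.degree_sub_lt hrd.symm hne hrlc.symm
        rw [← hq, Polynomial.degree_eq_natDegree hne] at this
        have := (Polynomial.natDegree_lt_iff_degree_lt h).mpr this
        omega
    obtain ⟨d', hd'⟩ := ih q hq0
    refine ⟨fun i => (if i < n then d' i else 0) + (if i = m then p.leadingCoeff else 0), ?_⟩
    have hsplit : ∑ i ∈ Finset.range (n+1),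
        Polynomial.C ((if i < n then d' i else 0) + (if i = m then p.leadingCoeff else 0)) * ell b i
        = (∑ i ∈ Finset.range (n+1), Polynomial.C (if i < n then d' i else 0) * ell b i)
          + ∑ i ∈ Finset.range (n+1), Polynomial.C (if i = m then p.leadingCoeff else 0) * ell b i := by
      rw [← Finset.sum_add_distrib]
      exact Finset.sum_congr rfl fun i _ => by rw [Polynomial.C_add]; ring
    have h1 : ∑ i ∈ Finset.range (n+1), Polynomial.C (if i < n then d' i else 0) * ell b i
        = ∑ i ∈ Finset.range n, Polynomial.C (d' i) * ell b i := by
      rw [Finset.sum_range_succ]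
      simp only [lt_irrefl, if_false, Polynomial.C_0, zero_mul, add_zero]
      exact Finset.sum_congr rfl fun i hi => by
        rw [if_pos (Finset.mem_range.mp hi)]
    have h2 : ∑ i ∈ Finset.range (n+1), Polynomial.C (if i = m then p.leadingCoeff else 0) * ell b i
        = r := by
      have : ∀ i, Polynomial.C (if i = m then p.leadingCoeff else 0) * ell b i
          = if i = m then Polynomial.C p.leadingCoeff * ell b i else 0 := by
        intro i; split_ifs <;> simp
      rw [Finset.sum_congr rfl fun i _ => this i, Finset.sum_ite_eq' (Finset.range (n+1)) m
        (fun i => Polynomial.C p.leadingCoeff * ell b i), if_pos (Finset.mem_range.mpr (by omega))]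
    rw [hsplit, h1, h2, ← hd', hq]
    ring

set_option maxHeartbeats 1000000 in
lemma ell_rescale {b : ℝ} (hb : -1 < b) (k : ℕ) (x : ℝ) :
    (ell b k).eval (x / 2) =
      (2 : ℝ)⁻¹ ^ k * ∑ i ∈ Finset.range (k + 1),
        (Real.Gamma (b + (k : ℝ) + 1) /
            (Real.Gamma (b + (i : ℝ) + 1) * Real.Gamma ((k : ℝ) - (i : ℝ) + 1))) *
          ((Nat.factorial k : ℝ) / (Nat.factorial i : ℝ)) * (-1 : ℝ) ^ (k - i) *
          (ell b i).eval x := by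
  have hG : ∀ j : ℕ, Real.Gamma (b + j + 1) ≠ 0 := fun j => ne_of_gt (Gpos hb j)
  -- step 1: rewrite each summand as an inner sum over j
  have step1 : ∀ i ∈ Finset.range (k+1),
      (Real.Gamma (b + (k : ℝ) + 1) /
            (Real.Gamma (b + (i : ℝ) + 1) * Real.Gamma ((k : ℝ) - (i : ℝ) + 1))) *
          ((Nat.factorial k : ℝ) / (Nat.factorial i : ℝ)) * (-1 : ℝ) ^ (k - i) *
          (ell b i).eval x
      = ∑ j ∈ Finset.range (k+1),
          ((-1:ℝ)^(k-j) * (Real.Gamma (b + k + 1) / Real.Gamma (b + j + 1))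
            * (k.choose i : ℝ) * (i.choose j : ℝ)) * x ^ j := by
    intro i hi
    have hik : i ≤ k := by simpa [Nat.lt_succ_iff] using hi
    have hGam : Real.Gamma ((k : ℝ) - (i : ℝ) + 1) = ((k - i).factorial : ℝ) := by
      have : (k : ℝ) - (i : ℝ) + 1 = ((k - i : ℕ) : ℝ) + 1 := by
        push_cast [hik]; ring
      rw [this, Real.Gamma_nat_eq_factorial]
    rw [hGam, ell_eval b i (k+1) (by omega) x, Finset.mul_sum]
    refine Finset.sum_congr rfl fun j hj => ?_
    rcases lt_or_ge i j with hij | hij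
    · rw [aL_zero b hij, Nat.choose_eq_zero_of_lt hij]
      simp
    · -- j ≤ i ≤ k
      rw [aL]
      have hsign : (-1:ℝ)^(k-j) = (-1:ℝ)^(k-i) * (-1:ℝ)^(i-j) := by
        rw [← pow_add]; congr 1; omega
      have hfact : ((k.choose i : ℝ)) = (k.factorial : ℝ) / ((i.factorial : ℝ) * ((k-i).factorial : ℝ)) :=
        Nat.cast_choose ℝ hik
      rw [hsign, hfact]
      have hf1 : (i.factorial : ℝ) ≠ 0 := Nat.cast_ne_zero.mpr (Nat.factorial_ne_zero i)
      have hf2 : ((k-i).factorial : ℝ) ≠ 0 := Nat.cast_ne_zero.mpr (Nat.factorial_ne_zero (k-i))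
      field_simp [hG i, hG j, hG k]
  rw [Finset.sum_congr rfl step1, Finset.sum_comm]
  -- step 2: evaluate the inner sums over i
  have step2 : ∀ j ∈ Finset.range (k+1),
      ∑ i ∈ Finset.range (k+1),
        ((-1:ℝ)^(k-j) * (Real.Gamma (b + k + 1) / Real.Gamma (b + j + 1))
          * (k.choose i : ℝ) * (i.choose j : ℝ)) * x ^ j
      = ((-1:ℝ)^(k-j) * (Real.Gamma (b + k + 1) / Real.Gamma (b + j + 1))
          * ((k.choose j : ℝ) * 2 ^ (k - j))) * x ^ j := by
    intro j hj
    have hjk : j ≤ k := by simpa [Nat.lt_succ_iff] using hj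
    rw [← Finset.sum_mul]
    congr 1
    have h1 : ∑ i ∈ Finset.range (k+1),
        (-1:ℝ)^(k-j) * (Real.Gamma (b + k + 1) / Real.Gamma (b + j + 1))
          * (k.choose i : ℝ) * (i.choose j : ℝ)
        = (-1:ℝ)^(k-j) * (Real.Gamma (b + k + 1) / Real.Gamma (b + j + 1))
          * ∑ i ∈ Finset.range (k+1), (k.choose i : ℝ) * (i.choose j : ℝ) := by
      rw [Finset.mul_sum]
      exact Finset.sum_congr rfl fun i _ => by ring
    rw [h1]
    have h2 : ∑ i ∈ Finset.range (k+1), (k.choose i : ℝ) * (i.choose j : ℝ)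
        = (k.choose j : ℝ) * 2 ^ (k - j) := by
      have := choose_sq_sum k j hjk
      exact_mod_cast congrArg (fun z : ℕ => (z : ℝ)) this
    rw [h2]
  rw [Finset.sum_congr rfl step2, ell_eval b k (k+1) (by omega) (x/2), Finset.mul_sum]
  -- step 3: termwise comparison
  refine Finset.sum_congr rfl fun j hj => ?_
  have hjk : j ≤ k := by simpa [Nat.lt_succ_iff] using hj
  rw [aL]
  have hxp : (x / 2) ^ j = x ^ j * ((2:ℝ)⁻¹) ^ j := by
    rw [div_pow, inv_pow]; exact div_eq_mul_inv _ _
  rw [hxp]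
  have h2 : ((2:ℝ)⁻¹) ^ k * 2 ^ (k-j) = ((2:ℝ)⁻¹) ^ j := by
    have hsplit : ((2:ℝ)⁻¹) ^ k = ((2:ℝ)⁻¹) ^ j * ((2:ℝ)⁻¹) ^ (k-j) := by
      rw [← pow_add]; congr 1; omega
    rw [hsplit, mul_assoc, ← mul_pow]
    norm_num
  linear_combination (-((-1:ℝ)^(k-j) * (k.choose j : ℝ) *
    (Real.Gamma (b+(k:ℝ)+1) / Real.Gamma (b+(j:ℝ)+1)) * x ^ j)) * h2

lemma W_sub {b : ℝ} (hb : -1 < b) (p r : Polynomial ℝ) : W b (p - r) = W b p - W b r := by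
  have h : p - r = p + Polynomial.C (-1) * r := by
    rw [Polynomial.C_neg, Polynomial.C_1]; ring
  rw [h, W_add hb, W_Cmul]; ring

lemma W_ell_ell_ne {b : ℝ} (hb : -1 < b) {m n : ℕ} (hmn : m ≠ n) :
    W b (ell b m * ell b n) = 0 := by
  rcases lt_or_gt_of_ne hmn with h | h
  · exact W_ell_ell hb h
  · rw [mul_comm]; exact W_ell_ell hb h

/-- The monic Laguerre polynomials with parameter `b > -1` satisfy the rescaling
connection formula
`L^b_k(x/2) = 2^{-k} ∑_{i=0}^{k} C(b+k, k-i) (k!/i!) (-1)^{i-k} L^b_i(x)`,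
where `C(b+k, k-i) = Γ(b+k+1)/(Γ(b+i+1)Γ(k-i+1))`. -/
theorem monic_laguerre_rescaling (b : ℝ) (hb : -1 < b)
    (L : ℕ → Polynomial ℝ)
    (hmonic : ∀ n : ℕ, (L n).Monic)
    (hdeg : ∀ n : ℕ, (L n).natDegree = n)
    (horth : ∀ m n : ℕ, m ≠ n →
      ∫ x in Set.Ioi (0 : ℝ),
        x ^ b * Real.exp (-x) * (L m).eval x * (L n).eval x = 0)
    (k : ℕ) (x : ℝ) :
    (L k).eval (x / 2) =
      (2 : ℝ)⁻¹ ^ k * ∑ i ∈ Finset.range (k + 1),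
        (Real.Gamma (b + (k : ℝ) + 1) /
            (Real.Gamma (b + (i : ℝ) + 1) * Real.Gamma ((k : ℝ) - (i : ℝ) + 1))) *
          ((Nat.factorial k : ℝ) / (Nat.factorial i : ℝ)) * (-1 : ℝ) ^ (k - i) *
          (L i).eval x := by
  have hWL : ∀ m n' : ℕ, m ≠ n' → W b (L m * L n') = 0 := by
    intro m n' h
    have hcongr : W b (L m * L n')
        = ∫ y in Set.Ioi (0:ℝ), y ^ b * Real.exp (-y) * (L m).eval y * (L n').eval y := by
      rw [W]; congr 1; funext y; rw [Polynomial.eval_mul]; ring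
    rw [hcongr]
    exact horth m n' h
  have hLell : ∀ n, L n = ell b n := by
    intro n
    induction n using Nat.strong_induction_on with
    | _ n ih =>
    set q := L n - ell b n with hq
    have hLne : L n ≠ 0 := (hmonic n).ne_zero
    have hq0 : q = 0 ∨ q.natDegree < n := by
      rcases eq_or_ne q 0 with h0 | h0
      · exact Or.inl h0
      · right
        have hdd : (L n).degree = (ell b n).degree := by
          rw [Polynomial.degree_eq_natDegree hLne,
            Polynomial.degree_eq_natDegree (ell_monic hb n).ne_zero, hdeg n, ell_natDegree hb]
        have hlc : (L n).leadingCoeff = (ell b n).leadingCoeff := by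
          rw [(hmonic n).leadingCoeff, (ell_monic hb n).leadingCoeff]
        have := Polynomial.degree_sub_lt hdd hLne hlc
        rw [← hq, Polynomial.degree_eq_natDegree hLne, hdeg n] at this
        exact (Polynomial.natDegree_lt_iff_degree_lt h0).mpr this
    rcases eq_or_ne q 0 with h0 | h0
    · exact sub_eq_zero.mp h0
    · exfalso
      obtain ⟨d, hd⟩ := ell_span hb n q hq0
      have hqell : ∀ m, m < n → W b (q * ell b m) = 0 := by
        intro m hm
        have h1 : q * ell b m = L n * L m - ell b n * ell b m := by
          rw [hq, ih m hm]; ring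
        rw [h1, W_sub hb, hWL n m (by omega), W_ell_ell_ne hb (by omega), sub_zero]
      have hrepr : q * q = ∑ i ∈ Finset.range n, Polynomial.C (d i) * (q * ell b i) := by
        nth_rw 2 [hd]
        rw [Finset.mul_sum]
        exact Finset.sum_congr rfl fun i _ => by ring
      have hWqq : W b (q * q) = 0 := by
        rw [hrepr, W_sum hb]
        apply Finset.sum_eq_zero
        intro i hi
        rw [W_Cmul, hqell i (Finset.mem_range.mp hi), mul_zero]
      exact absurd hWqq (ne_of_gt (W_sq_pos hb h0))
  rw [hLell k, ell_rescale hb k x]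
  congr 1
  exact Finset.sum_congr rfl fun i _ => by rw [hLell i]
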